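/- Purity bounds the largest eigenvalue of the quantum kernel integral operator: if k(x,y) = tr(ρ(x)ρ(y)) is a quantum kernel with pure-state embedding (so k(x,x)=1 for all x) and ρ_μ = ∫ρ(y)dμ(y) is the mean density matrix, then the largest eigenvalue γ_max of the integral operator K satisfies γ_max ≤ √(tr(ρ_μ²)). -/

import Mathlib

open MeasureTheory Matrix ComplexOrder
open scoped ComplexConjugate

namespace QKaux

attribute [local instance] Matrix.frobeniusSeminormedAddCommGroup

variable {N : ℕ}

noncomputable def vec (A : Matrix (Fin N) (Fin N) ℂ) : EuclideanSpace ℂ (Fin N × Fin N) :=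
  (WithLp.equiv 2 _).symm fun p => A p.2 p.1

lemma trace_mul_eq_sum (A B : Matrix (Fin N) (Fin N) ℂ) :
    (A * B).trace = ∑ i, ∑ j, A i j * B j i := by
  simp [Matrix.trace, Matrix.diag, Matrix.mul_apply]

lemma inner_vec (A B : Matrix (Fin N) (Fin N) ℂ) :
    (inner ℂ (vec A) (vec B) : ℂ) = (Aᴴ * B).trace := by
  simp [vec, PiLp.inner_apply, RCLike.inner_apply, Matrix.trace, Matrix.diag,
    Matrix.mul_apply, Matrix.conjTranspose_apply, Fintype.sum_prod_type, mul_comm]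

lemma norm_vec (A : Matrix (Fin N) (Fin N) ℂ) : ‖vec A‖ = ‖A‖ := by
  rw [EuclideanSpace.norm_eq, Matrix.frobenius_norm_def, Real.sqrt_eq_rpow]
  congr 1
  rw [Fintype.sum_prod_type, Finset.sum_comm]
  simp [vec, Real.rpow_two]

lemma cs (A B : Matrix (Fin N) (Fin N) ℂ) : ‖(Aᴴ * B).trace‖ ≤ ‖A‖ * ‖B‖ := by
  rw [← inner_vec, ← norm_vec A, ← norm_vec B]
  exact norm_inner_le_norm _ _

lemma trace_conjT_self (A : Matrix (Fin N) (Fin N) ℂ) :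
    (Aᴴ * A).trace = ((‖A‖ : ℂ)) ^ 2 := by
  rw [← inner_vec, ← norm_vec A]
  rw [inner_self_eq_norm_sq_to_K]; norm_cast

lemma entry_le (A : Matrix (Fin N) (Fin N) ℂ) (i j : Fin N) : ‖A i j‖ ≤ ‖A‖ := by
  rw [← norm_vec A, EuclideanSpace.norm_eq]
  rw [show ‖A i j‖ = Real.sqrt (‖A i j‖ ^ 2) from (Real.sqrt_sq (norm_nonneg _)).symm]
  apply Real.sqrt_le_sqrt
  rw [show ‖A i j‖ ^ 2 = ‖vec A (j, i)‖ ^ 2 from rfl]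
  exact Finset.single_le_sum (fun p _ => sq_nonneg ‖vec A p‖) (Finset.mem_univ (j, i))

lemma pointwise (P M : Matrix (Fin N) (Fin N) ℂ) (hP : Pᴴ = P) (hPP : P * P = P)
    (hM : Mᴴ = M) (hP1 : ‖P‖ = 1) :
    ((P * M).trace.re) ^ 2 ≤ ((P * (M * M)).trace).re := by
  have h1 : (P * M).trace = (Pᴴ * (P * M)).trace := by rw [hP, ← mul_assoc, hPP]
  have h2 : ‖(P * M).trace‖ ≤ ‖P * M‖ := by
    calc ‖(P * M).trace‖ = ‖(Pᴴ * (P * M)).trace‖ := by rw [← h1]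
      _ ≤ ‖P‖ * ‖P * M‖ := cs P (P * M)
      _ = ‖P * M‖ := by rw [hP1, one_mul]
  have h4 : ((P * M)ᴴ * (P * M)).trace = (P * (M * M)).trace := by
    rw [Matrix.conjTranspose_mul, hP, hM, mul_assoc M P (P*M),
      ← mul_assoc P P M, hPP, Matrix.trace_mul_comm, ← mul_assoc]
  have h3 : (P * (M * M)).trace = ((‖P * M‖ : ℂ)) ^ 2 := by
    rw [← h4, trace_conjT_self]
  calc ((P * M).trace.re) ^ 2 = |(P * M).trace.re| ^ 2 := (sq_abs _).symm
    _ ≤ ‖(P * M).trace‖ ^ 2 := by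
        have h := Complex.abs_re_le_norm ((P * M).trace)
        exact pow_le_pow_left₀ (abs_nonneg _) h 2
    _ ≤ ‖P * M‖ ^ 2 := pow_le_pow_left₀ (norm_nonneg _) h2 2
    _ = (P * (M * M)).trace.re := by rw [h3]; rw [← Complex.ofReal_pow, Complex.ofReal_re]

end QKaux
section Main

open MeasureTheory Matrix ComplexOrder QKaux
open scoped ComplexConjugate

attribute [local instance] Matrix.frobeniusSeminormedAddCommGroup

/-- Purity bounds the largest eigenvalue of the quantum kernel integral operator:
for a pure-state embedding `ρ`, any `L²` eigenvalue `γ` of the integral operator of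
`k(x,y) = tr(ρ(x)ρ(y))` satisfies `γ ≤ √(tr(ρ_μ²))`, where `ρ_μ = ∫ ρ dμ`. -/
theorem stmt3 {X : Type*} [MeasurableSpace X] (μ : Measure X) [IsProbabilityMeasure μ]
    {N : ℕ} (ρ : X → Matrix (Fin N) (Fin N) ℂ)
    (hmeas : ∀ i j, Measurable fun x => ρ x i j)
    (hherm : ∀ x, (ρ x).IsHermitian) (hpsd : ∀ x, (ρ x).PosSemidef)
    (htr : ∀ x, (ρ x).trace = 1) (hpure : ∀ x, ρ x * ρ x = ρ x)
    (ρμ : Matrix (Fin N) (Fin N) ℂ)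
    (hρμ : ∀ i j, ρμ i j = ∫ y, ρ y i j ∂μ)
    (γ : ℝ) (f : X → ℝ) (hf : MemLp f 2 μ)
    (hf0 : ¬ (∀ᵐ x ∂μ, f x = 0))
    (heig : ∀ x, ∫ y, (Matrix.trace (ρ x * ρ y)).re * f y ∂μ = γ * f x) :
    γ ≤ Real.sqrt (Matrix.trace (ρμ * ρμ)).re := by
  classical
  have hfm := hf.aestronglyMeasurable
  have hfi : Integrable f μ := hf.integrable one_le_two
  have hfsq : Integrable (fun x => f x ^ 2) μ := hf.integrable_sq
  -- purity gives Frobenius norm 1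
  have hρnorm : ∀ x, ‖ρ x‖ = 1 := by
    intro x
    have h := trace_conjT_self (ρ x)
    rw [hherm x, hpure x, htr x] at h
    have h2 : (1 : ℝ) = ‖ρ x‖ ^ 2 := by exact_mod_cast h
    rw [← Real.sqrt_sq (norm_nonneg (ρ x)), ← h2, Real.sqrt_one]
  have hentry : ∀ x i j, ‖ρ x i j‖ ≤ 1 := fun x i j =>
    (entry_le (ρ x) i j).trans_eq (hρnorm x)
  have hρint : ∀ i j, Integrable (fun y => ρ y i j) μ := by
    intro i j
    exact (integrable_const (1 : ℝ)).mono' ((hmeas i j).aestronglyMeasurable)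
      (Filter.Eventually.of_forall fun y => by simpa using hentry y i j)
  have hcm : AEStronglyMeasurable (fun y => (f y : ℂ)) μ :=
    Complex.continuous_ofReal.comp_aestronglyMeasurable hfm
  have hfρ : ∀ i j, Integrable (fun y => (f y : ℂ) * ρ y i j) μ := by
    intro i j
    refine hfi.abs.mono' (hcm.mul ((hmeas i j).aestronglyMeasurable))
      (Filter.Eventually.of_forall fun y => ?_)
    rw [norm_mul]
    calc ‖(f y : ℂ)‖ * ‖ρ y i j‖ ≤ ‖(f y : ℂ)‖ * 1 := by
          gcongr
          exact hentry y i j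
      _ = |f y| := by simp [Complex.norm_real]
  set M : Matrix (Fin N) (Fin N) ℂ := Matrix.of fun i j => ∫ y, (f y : ℂ) * ρ y i j ∂μ
    with hMdef
  have hMe : ∀ i j, M i j = ∫ y, (f y : ℂ) * ρ y i j ∂μ := fun i j => rfl
  have hconj : ∀ x i j, (starRingEnd ℂ) (ρ x i j) = ρ x j i := by
    intro x i j
    have h := congrFun (congrFun (hherm x) j) i
    rw [Matrix.conjTranspose_apply] at h
    exact h
  have hMherm : Mᴴ = M := by
    ext i j
    rw [Matrix.conjTranspose_apply, hMe j i, hMe i j]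
    rw [show star (∫ y, (f y : ℂ) * ρ y j i ∂μ) = (starRingEnd ℂ) (∫ y, (f y : ℂ) * ρ y j i ∂μ)
      from rfl]
    rw [← integral_conj]
    congr 1; funext y
    rw [_root_.map_mul, Complex.conj_ofReal, hconj]
  have hkerint : ∀ x, Integrable (fun y => (f y : ℂ) * (ρ x * ρ y).trace) μ := by
    intro x
    have he : (fun y => (f y : ℂ) * (ρ x * ρ y).trace)
        = fun y => ∑ i, ∑ j, ρ x i j * ((f y : ℂ) * ρ y j i) := by
      funext y
      rw [trace_mul_eq_sum, Finset.mul_sum]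
      refine Finset.sum_congr rfl fun i _ => ?_
      rw [Finset.mul_sum]
      exact Finset.sum_congr rfl fun j _ => by ring
    rw [he]
    exact integrable_finset_sum _ fun i _ =>
      integrable_finset_sum _ fun j _ => ((hfρ j i).const_mul _)
  have key1 : ∀ x, (ρ x * M).trace = ∫ y, (f y : ℂ) * (ρ x * ρ y).trace ∂μ := by
    intro x
    rw [trace_mul_eq_sum]
    calc (∑ i, ∑ j, ρ x i j * M j i)
        = ∑ i, ∑ j, ∫ y, ρ x i j * ((f y : ℂ) * ρ y j i) ∂μ := by
          refine Finset.sum_congr rfl fun i _ => Finset.sum_congr rfl fun j _ => ?_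
          rw [hMe j i]
          exact (integral_const_mul _ _).symm
      _ = ∑ i, ∫ y, ∑ j, ρ x i j * ((f y : ℂ) * ρ y j i) ∂μ :=
          Finset.sum_congr rfl fun i _ =>
            (integral_finset_sum _ fun j _ => (hfρ j i).const_mul _).symm
      _ = ∫ y, ∑ i, ∑ j, ρ x i j * ((f y : ℂ) * ρ y j i) ∂μ :=
          (integral_finset_sum _ fun i _ =>
            integrable_finset_sum _ fun j _ => (hfρ j i).const_mul _).symm
      _ = ∫ y, (f y : ℂ) * (ρ x * ρ y).trace ∂μ := by
          congr 1; funext y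
          rw [trace_mul_eq_sum, Finset.mul_sum]
          refine (Finset.sum_congr rfl fun i _ => ?_).symm
          rw [Finset.mul_sum]
          exact Finset.sum_congr rfl fun j _ => by ring
  have key1re : ∀ x, ((ρ x * M).trace).re = γ * f x := by
    intro x
    have h := integral_re (hkerint x)
    simp only [RCLike.re_to_complex] at h
    rw [key1 x, ← heig x, ← h]
    congr 1; funext y
    simp only [Complex.mul_re, Complex.ofReal_re, Complex.ofReal_im, zero_mul, sub_zero]
    ring
  have hre : ∀ (x) (C : Matrix (Fin N) (Fin N) ℂ),
      ((ρ x * C).trace).re = ∑ i, ∑ j, (ρ x i j * C j i).re := by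
    intro x C
    rw [trace_mul_eq_sum, Complex.re_sum]
    exact Finset.sum_congr rfl fun i _ => Complex.re_sum _ _
  have hint2 : ∀ (C : Matrix (Fin N) (Fin N) ℂ) (i j : Fin N),
      Integrable (fun x => (ρ x i j * C j i).re) μ := by
    intro C i j
    simpa using ((hρint i j).mul_const (C j i)).re
  have htrCint : ∀ C : Matrix (Fin N) (Fin N) ℂ,
      Integrable (fun x => ((ρ x * C).trace).re) μ := by
    intro C
    have h : (fun x => ((ρ x * C).trace).re)
        = fun x => ∑ i, ∑ j, (ρ x i j * C j i).re := funext fun x => hre x C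
    rw [h]
    exact integrable_finset_sum _ fun i _ => integrable_finset_sum _ fun j _ => hint2 C i j
  have key2 : ∀ C : Matrix (Fin N) (Fin N) ℂ,
      ∫ x, ((ρ x * C).trace).re ∂μ = ((ρμ * C).trace).re := by
    intro C
    calc ∫ x, ((ρ x * C).trace).re ∂μ
        = ∫ x, ∑ i, ∑ j, (ρ x i j * C j i).re ∂μ := by
          congr 1; funext x; exact hre x C
      _ = ∑ i, ∑ j, ∫ x, (ρ x i j * C j i).re ∂μ := by
          rw [integral_finset_sum _
            (fun i _ => integrable_finset_sum _ fun j _ => hint2 C i j)]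
          exact Finset.sum_congr rfl fun i _ => integral_finset_sum _ fun j _ => hint2 C i j
      _ = ∑ i, ∑ j, (ρμ i j * C j i).re := by
          refine Finset.sum_congr rfl fun i _ => Finset.sum_congr rfl fun j _ => ?_
          calc ∫ x, (ρ x i j * C j i).re ∂μ = (∫ x, ρ x i j * C j i ∂μ).re := by
                simpa using integral_re ((hρint i j).mul_const (C j i))
            _ = ((∫ x, ρ x i j ∂μ) * C j i).re := by rw [integral_mul_const]
            _ = (ρμ i j * C j i).re := by rw [hρμ i j]
      _ = ((ρμ * C).trace).re := by
          rw [trace_mul_eq_sum, Complex.re_sum]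
          exact Finset.sum_congr rfl fun i _ => (Complex.re_sum _ _).symm
  have key3 : (M * M).trace.re = γ * ∫ x, f x ^ 2 ∂μ := by
    rw [trace_mul_eq_sum, Complex.re_sum]
    calc ∑ i, (∑ j, M i j * M j i).re
        = ∑ i, ∑ j, (M i j * M j i).re :=
          Finset.sum_congr rfl fun i _ => Complex.re_sum _ _
      _ = ∑ i, ∑ j, ∫ x, ((f x : ℂ) * ρ x i j * M j i).re ∂μ := by
          refine Finset.sum_congr rfl fun i _ => Finset.sum_congr rfl fun j _ => ?_
          have h2 : M i j * M j i = ∫ x, (f x : ℂ) * ρ x i j * M j i ∂μ := by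
            rw [hMe i j, ← integral_mul_const]
          rw [h2]
          have h5 := integral_re ((hfρ i j).mul_const (M j i))
          simp only [RCLike.re_to_complex] at h5
          exact h5.symm
      _ = ∫ x, ∑ i, ∑ j, ((f x : ℂ) * ρ x i j * M j i).re ∂μ := by
          rw [integral_finset_sum _ (fun i _ => integrable_finset_sum _ fun j _ => by
            simpa using ((hfρ i j).mul_const (M j i)).re)]
          exact (Finset.sum_congr rfl fun i _ => integral_finset_sum _ fun j _ => by
            simpa using ((hfρ i j).mul_const (M j i)).re).symm
      _ = ∫ x, γ * f x ^ 2 ∂μ := by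
          congr 1; funext x
          have h : ∑ i, ∑ j, ((f x : ℂ) * ρ x i j * M j i).re
              = ((f x : ℂ) * (ρ x * M).trace).re := by
            rw [trace_mul_eq_sum, Finset.mul_sum, Complex.re_sum]
            refine Finset.sum_congr rfl fun i _ => ?_
            rw [Finset.mul_sum, Complex.re_sum]
            exact Finset.sum_congr rfl fun j _ => by rw [← mul_assoc]
          rw [h]
          have h3 : ((f x : ℂ) * (ρ x * M).trace).re = f x * ((ρ x * M).trace).re := by
            simp [Complex.mul_re]
          rw [h3, key1re x]
          ring
      _ = γ * ∫ x, f x ^ 2 ∂μ := integral_const_mul γ _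
  have hM2 : ‖M‖ ^ 2 = γ * ∫ x, f x ^ 2 ∂μ := by
    have h := trace_conjT_self M
    rw [hMherm] at h
    have h2 : (M * M).trace.re = ‖M‖ ^ 2 := by
      rw [h, ← Complex.ofReal_pow, Complex.ofReal_re]
    rw [← h2, key3]
  have hρμherm : ρμᴴ = ρμ := by
    ext i j
    rw [Matrix.conjTranspose_apply, hρμ j i, hρμ i j]
    rw [show star (∫ y, ρ y j i ∂μ) = (starRingEnd ℂ) (∫ y, ρ y j i ∂μ) from rfl]
    rw [← integral_conj]
    congr 1; funext y
    exact hconj y j i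
  have hρμnorm : ‖ρμ‖ = Real.sqrt (((ρμ * ρμ).trace).re) := by
    have h := trace_conjT_self ρμ
    rw [hρμherm] at h
    have h2 : ((ρμ * ρμ).trace).re = ‖ρμ‖ ^ 2 := by
      rw [h, ← Complex.ofReal_pow, Complex.ofReal_re]
    rw [h2, Real.sqrt_sq (norm_nonneg _)]
  have hTpos : 0 < ∫ x, f x ^ 2 ∂μ := by
    rcases (integral_nonneg (f := fun x => f x ^ 2) fun x => sq_nonneg (f x)).lt_or_eq with h | h
    · exact h
    · exfalso
      have hz := (integral_eq_zero_iff_of_nonneg (f := fun x => f x ^ 2) (fun x => sq_nonneg (f x)) hfsq).mp h.symm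
      apply hf0
      filter_upwards [hz] with x hx
      exact pow_eq_zero_iff two_ne_zero |>.mp hx
  have main1 : γ ^ 2 * ∫ x, f x ^ 2 ∂μ ≤ ((ρμ * (M * M)).trace).re := by
    have hpt : ∀ x, (γ * f x) ^ 2 ≤ ((ρ x * (M * M)).trace).re := by
      intro x
      rw [← key1re x]
      exact pointwise (ρ x) M (hherm x) (hpure x) hMherm (hρnorm x)
    have hmono := integral_mono_of_nonneg
      (Filter.Eventually.of_forall fun x => sq_nonneg (γ * f x))
      (htrCint (M * M)) (Filter.Eventually.of_forall hpt)
    calc γ ^ 2 * ∫ x, f x ^ 2 ∂μ = ∫ x, (γ * f x) ^ 2 ∂μ := by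
          rw [← integral_const_mul]
          congr 1; funext x; ring
      _ ≤ ∫ x, ((ρ x * (M * M)).trace).re ∂μ := hmono
      _ = ((ρμ * (M * M)).trace).re := key2 (M * M)
  have main2 : ((ρμ * (M * M)).trace).re
      ≤ Real.sqrt (((ρμ * ρμ).trace).re) * (γ * ∫ x, f x ^ 2 ∂μ) := by
    calc ((ρμ * (M * M)).trace).re ≤ ‖(ρμ * (M * M)).trace‖ := by
          exact Complex.re_le_norm _
      _ = ‖(ρμᴴ * (M * M)).trace‖ := by rw [hρμherm]
      _ ≤ ‖ρμ‖ * ‖M * M‖ := cs _ _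
      _ ≤ ‖ρμ‖ * (‖M‖ * ‖M‖) :=
          mul_le_mul_of_nonneg_left (Matrix.frobenius_norm_mul M M) (norm_nonneg _)
      _ = Real.sqrt (((ρμ * ρμ).trace).re) * (γ * ∫ x, f x ^ 2 ∂μ) := by
          rw [hρμnorm]
          congr 1
          rw [← pow_two, hM2]
  rcases le_or_gt γ 0 with hγ | hγ
  · exact hγ.trans (Real.sqrt_nonneg _)
  · nlinarith [main1.trans main2, mul_pos hγ hTpos,
      Real.sqrt_nonneg (((ρμ * ρμ).trace).re)]

end Main
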